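/- For n ≥ 3, the GTR model is not multiplicatively closed: there exist symmetric n×n Markov matrices M_1, M_2 such that no distribution vector π satisfies M_1 M_2 D(π) = D(π)(M_1M_2)^T. -/

import Mathlib

open Matrix

theorem gtr_not_multiplicatively_closed {n : ℕ} (hn : 3 ≤ n) :
    ∃ M₁ M₂ : Matrix (Fin n) (Fin n) ℝ,
      (∀ i j, 0 ≤ M₁ i j) ∧ (∀ j, ∑ i, M₁ i j = 1) ∧ M₁.transpose = M₁ ∧
      (∀ i j, 0 ≤ M₂ i j) ∧ (∀ j, ∑ i, M₂ i j = 1) ∧ M₂.transpose = M₂ ∧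
      ∀ π : Fin n → ℝ, (∀ i, 0 < π i) → ∑ i, π i = 1 →
        (M₁ * M₂) * Matrix.diagonal π ≠ Matrix.diagonal π * (M₁ * M₂).transpose := by
  set a : Fin n := ⟨0, by omega⟩ with ha
  set b : Fin n := ⟨1, by omega⟩ with hb
  set c : Fin n := ⟨2, by omega⟩ with hc
  have hab : a ≠ b := by simp [ha, hb, Fin.ext_iff]
  have hbc : b ≠ c := by simp [hb, hc, Fin.ext_iff]
  have hac : a ≠ c := by simp [ha, hc, Fin.ext_iff]
  set σ : Equiv.Perm (Fin n) := Equiv.swap a b with hσ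
  set τ : Equiv.Perm (Fin n) := Equiv.swap b c with hτ
  set P : Equiv.Perm (Fin n) → Matrix (Fin n) (Fin n) ℝ :=
    fun ρ => Matrix.of fun i j => if ρ j = i then 1 else 0 with hP
  have hsum : ∀ (ρ : Equiv.Perm (Fin n)) (j : Fin n), ∑ i, P ρ i j = 1 := by
    intro ρ j; simp [hP]
  have hnn : ∀ (ρ : Equiv.Perm (Fin n)) (i j : Fin n), 0 ≤ P ρ i j := by
    intro ρ i j
    simp only [hP, Matrix.of_apply]
    split <;> norm_num
  have hsym : ∀ ρ : Equiv.Perm (Fin n), ρ * ρ = 1 → (P ρ)ᵀ = P ρ := by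
    intro ρ hρ
    ext i j
    simp only [transpose_apply, hP, Matrix.of_apply]
    have key : ρ i = j ↔ ρ j = i := by
      constructor
      · rintro rfl
        have := congrArg (fun f => f i) hρ
        simpa [Equiv.Perm.mul_apply] using this
      · rintro rfl
        have := congrArg (fun f => f j) hρ
        simpa [Equiv.Perm.mul_apply] using this
    simp [key]
  have hmul : ∀ ρ₁ ρ₂ : Equiv.Perm (Fin n), P ρ₁ * P ρ₂ = P (ρ₁ * ρ₂) := by
    intro ρ₁ ρ₂
    ext i j
    simp only [mul_apply, hP, Matrix.of_apply, Equiv.Perm.mul_apply]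
    rw [Finset.sum_eq_single (ρ₂ j)]
    · simp; congr
    · intro k _ hk; simp [Ne.symm hk]
    · simp
  refine ⟨P σ, P τ, hnn σ, hsum σ, hsym σ (Equiv.swap_mul_self _ _),
    hnn τ, hsum τ, hsym τ (Equiv.swap_mul_self _ _), ?_⟩
  intro π hpos _ heq
  rw [hmul] at heq
  have h := congrFun (congrFun heq b) a
  have h1 : (σ * τ) a = b := by
    simp [hσ, hτ, Equiv.Perm.mul_apply, Equiv.swap_apply_of_ne_of_ne hab hac,
      Equiv.swap_apply_left]
  have h2 : (σ * τ) b ≠ a := by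
    simp only [hσ, hτ, Equiv.Perm.mul_apply, Equiv.swap_apply_left]
    rw [Equiv.swap_apply_of_ne_of_ne (Ne.symm hac) (Ne.symm hbc)]
    exact Ne.symm hac
  rw [mul_diagonal, diagonal_mul] at h
  simp only [transpose_apply, hP, Matrix.of_apply, h1, if_neg h2, mul_zero] at h
  norm_num at h
  exact absurd h (ne_of_gt (hpos a))
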